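/- The minimum spanning tree of a finite point set in a metric space (with distinct pairwise distances) is a subgraph of the relative neighborhood graph: every MST edge (u,v) satisfies that there is no point w with max(δ(u,w), δ(v,w)) < δ(u,v). -/

import Mathlib

attribute [local instance] Classical.propDecidable

/-- Total edge weight of a graph `G` on vertex set `V` whose vertices are
realized as points `f : V → M` of a metric space (each edge counted twice,
once in each direction, which does not affect weight comparisons). -/
noncomputable def weight {V : Type*} [Fintype V] {M : Type*} [MetricSpace M]
    (f : V → M) (G : SimpleGraph V) : ℝ :=
  ∑ u : V, ∑ v : V, if G.Adj u v then dist (f u) (f v) else 0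

open SimpleGraph in
/-- In a connected graph, after deleting the edge `(u,v)`, every vertex can
still reach `u` or `v`. -/
lemma reach_or {V : Type*} (T : SimpleGraph V) (hconn : T.Connected) (u v : V) (a : V) :
    (T \ SimpleGraph.fromEdgeSet {s(u, v)}).Reachable a u ∨
      (T \ SimpleGraph.fromEdgeSet {s(u, v)}).Reachable a v := by
  obtain ⟨p⟩ := hconn.preconnected a u
  induction p with
  | nil => exact Or.inl (Reachable.refl _)
  | @cons a b u h q ih =>
    by_cases he : s(a, b) = s(u, v)
    · rw [Sym2.eq_iff] at he
      rcases he with ⟨rfl, rfl⟩ | ⟨rfl, rfl⟩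
      · exact Or.inl (Reachable.refl _)
      · exact Or.inr (Reachable.refl _)
    · have hadj : (T \ SimpleGraph.fromEdgeSet {s(u, v)}).Adj a b := by
        rw [sdiff_adj, fromEdgeSet_adj]
        exact ⟨h, fun hh => he hh.1⟩
      rcases ih with h1 | h1
      · exact Or.inl (hadj.reachable.trans h1)
      · exact Or.inr (hadj.reachable.trans h1)

open SimpleGraph in
/-- Exchange lemma: if `(u,v)` is an edge of the tree `T` and `w` is reachable
from `u` after deleting this edge, then replacing the edge `(u,v)` by `(v,w)`
yields again a tree. -/
lemma exchange {V : Type*} (T : SimpleGraph V) (hT : T.IsTree)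
    (u v w : V) (huv : T.Adj u v) (hwu : w ≠ u) (hwv : w ≠ v)
    (hrw : (T \ SimpleGraph.fromEdgeSet {s(u, v)}).Reachable u w) :
    ∃ T' : SimpleGraph V, T'.IsTree ∧ ¬ T.Adj v w ∧
      ∀ a b, T'.Adj a b ↔ (T.Adj a b ∧ s(a, b) ≠ s(u, v)) ∨ s(a, b) = s(v, w) := by
  classical
  set T₀ := T \ SimpleGraph.fromEdgeSet {s(u, v)} with hT₀
  have hb : ¬ T₀.Reachable u v :=
    (isAcyclic_iff_forall_adj_isBridge.mp hT.2) huv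
  have hnr : ¬ T₀.Reachable v w := fun h => hb (hrw.trans h.symm)
  have hvw : v ≠ w := Ne.symm hwv
  have hnadj : ¬ T.Adj v w := by
    intro h
    apply hnr
    refine Adj.reachable ?_
    rw [hT₀, sdiff_adj, fromEdgeSet_adj]
    refine ⟨h, ?_⟩
    rintro ⟨hh, -⟩
    simp only [Set.mem_singleton_iff, Sym2.eq_iff] at hh
    rcases hh with ⟨rfl, rfl⟩ | ⟨-, rfl⟩
    · exact hwv rfl
    · exact hwu rfl
  set T' := T₀ ⊔ SimpleGraph.fromEdgeSet {s(v, w)} with hT'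
  have hadj : ∀ a b, T'.Adj a b ↔ (T.Adj a b ∧ s(a, b) ≠ s(u, v)) ∨ s(a, b) = s(v, w) := by
    intro a b
    rw [hT', sup_adj, hT₀, sdiff_adj, fromEdgeSet_adj, fromEdgeSet_adj]
    constructor
    · rintro (⟨h1, h2⟩ | ⟨h3, -⟩)
      · exact Or.inl ⟨h1, fun hh => h2 ⟨by simpa using hh, h1.ne⟩⟩
      · exact Or.inr (by simpa using h3)
    · rintro (⟨h1, h2⟩ | h3)
      · exact Or.inl ⟨h1, fun hh => h2 (by simpa using hh.1)⟩
      · refine Or.inr ⟨by simpa using h3, ?_⟩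
        rw [Sym2.eq_iff] at h3
        rcases h3 with ⟨rfl, rfl⟩ | ⟨rfl, rfl⟩
        · exact hvw
        · exact hwv
  have hT₀le : T₀ ≤ T' := le_sup_left
  have hvwadj : T'.Adj v w := (hadj v w).mpr (Or.inr rfl)
  have hconn : T'.Connected := by
    rw [connected_iff_exists_forall_reachable]
    refine ⟨v, fun a => ?_⟩
    have huvreach : T'.Reachable u v :=
      (hrw.mono hT₀le).trans hvwadj.symm.reachable
    rcases reach_or T hT.1 u v a with h1 | h1
    · exact ((h1.mono hT₀le).trans huvreach).symm
    · exact (h1.mono hT₀le).symm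
  have hacyc : T'.IsAcyclic := by
    intro x c hc
    by_cases hmem : s(v, w) ∈ c.edges
    · have hr := (adj_and_reachable_delete_edges_iff_exists_cycle.mpr ⟨x, c, hc, hmem⟩).2
      apply hnr
      refine hr.mono ?_
      intro a b hab
      rw [deleteEdges, sdiff_adj, fromEdgeSet_adj] at hab
      obtain ⟨hab1, hab2⟩ := hab
      rcases (hadj a b).mp hab1 with ⟨h1, h2⟩ | h3
      · rw [hT₀, sdiff_adj, fromEdgeSet_adj]
        exact ⟨h1, fun hh => h2 (by simpa using hh.1)⟩
      · exact absurd ⟨by simpa using h3, hab1.ne⟩ hab2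
    · have hsub : ∀ e ∈ c.edges, e ∈ T.edgeSet := by
        intro e he
        induction e with
        | h a b =>
          have hab := c.adj_of_mem_edges he
          rcases (hadj a b).mp hab with ⟨h1, -⟩ | h3
          · exact h1
          · exact absurd (h3 ▸ he) hmem
      exact hT.2 (c.transfer T hsub) (hc.transfer hsub)
  exact ⟨T', ⟨hconn, hacyc⟩, hnadj, hadj⟩

lemma sum_ind {V : Type*} [Fintype V] [DecidableEq V] (x w : V) (hxw : x ≠ w) (c : ℝ) :
    ∑ a : V, ∑ b : V, (if s(a, b) = s(x, w) then c else 0) = 2 * c := by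
  have key : ∀ a b : V, (if s(a, b) = s(x, w) then c else 0)
      = (if a = x then (if b = w then c else 0) else 0)
        + (if a = w then (if b = x then c else 0) else 0) := by
    intro a b
    simp only [Sym2.eq_iff]
    by_cases h1 : a = x ∧ b = w
    · have h2 : ¬(a = w ∧ b = x) := by
        rintro ⟨rfl, -⟩; exact hxw (h1.1.symm)
      obtain ⟨rfl, rfl⟩ := h1
      simp [hxw, Ne.symm hxw]
    · by_cases h2 : a = w ∧ b = x
      · obtain ⟨rfl, rfl⟩ := h2
        simp [hxw, Ne.symm hxw]
      · rw [if_neg (by tauto)]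
        rcases not_and_or.mp h1 with h | h <;> rcases not_and_or.mp h2 with h' | h' <;>
          simp [h, h']
  simp only [key]
  simp only [Finset.sum_add_distrib]
  have e1 : ∀ (p q : V), (∑ a : V, if a = p then (∑ b : V, if b = q then c else 0)
      else 0) = c := by
    intro p q
    rw [Finset.sum_ite_eq' Finset.univ p (fun _ => ∑ b : V, if b = q then c else 0),
      if_pos (Finset.mem_univ p), Finset.sum_ite_eq' Finset.univ q (fun _ => c),
      if_pos (Finset.mem_univ q)]
  have e2 : (∑ a : V, ∑ b : V, if a = x then (if b = w then c else 0) else 0) = c := by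
    rw [← e1 x w]
    refine Finset.sum_congr rfl fun a _ => ?_
    by_cases h : a = x <;> simp [h]
  have e3 : (∑ a : V, ∑ b : V, if a = w then (if b = x then c else 0) else 0) = c := by
    rw [← e1 w x]
    refine Finset.sum_congr rfl fun a _ => ?_
    by_cases h : a = w <;> simp [h]
  rw [e2, e3]; ring

lemma weight_exchange {V : Type*} [Fintype V] [DecidableEq V] {M : Type*} [MetricSpace M]
    (f : V → M) (T T' : SimpleGraph V) (u v x w : V)
    (huv : T.Adj u v) (hxw : ¬ T.Adj x w)
    (hne : s(x, w) ≠ s(u, v)) (hxwne : x ≠ w)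
    (hadj : ∀ a b, T'.Adj a b ↔ (T.Adj a b ∧ s(a, b) ≠ s(u, v)) ∨ s(a, b) = s(x, w)) :
    weight f T' = weight f T + 2 * dist (f x) (f w) - 2 * dist (f u) (f v) := by
  have key : ∀ a b : V, (if T'.Adj a b then dist (f a) (f b) else 0)
      = ((if T.Adj a b then dist (f a) (f b) else 0)
        + (if s(a, b) = s(x, w) then dist (f x) (f w) else 0))
        - (if s(a, b) = s(u, v) then dist (f u) (f v) else 0) := by
    intro a b
    by_cases h1 : s(a, b) = s(u, v)
    · have h2 : s(a, b) ≠ s(x, w) := fun hh => hne (by rw [← hh, h1])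
      have hT'ab : ¬ T'.Adj a b := by
        rw [hadj]
        rintro (⟨-, hc⟩ | hc)
        · exact hc h1
        · exact h2 hc
      rw [Sym2.eq_iff] at h1
      have hTab : T.Adj a b := by
        rcases h1 with ⟨rfl, rfl⟩ | ⟨rfl, rfl⟩
        · exact huv
        · exact huv.symm
      have hd : dist (f a) (f b) = dist (f u) (f v) := by
        rcases h1 with ⟨rfl, rfl⟩ | ⟨rfl, rfl⟩
        · rfl
        · exact dist_comm _ _
      rw [if_neg hT'ab, if_pos hTab, if_neg h2,
        if_pos (Sym2.eq_iff.mpr h1), hd]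
      ring
    · by_cases h2 : s(a, b) = s(x, w)
      · have hT'ab : T'.Adj a b := (hadj a b).mpr (Or.inr h2)
        rw [Sym2.eq_iff] at h2
        have hTab : ¬ T.Adj a b := by
          rcases h2 with ⟨rfl, rfl⟩ | ⟨rfl, rfl⟩
          · exact hxw
          · exact fun h => hxw h.symm
        have hd : dist (f a) (f b) = dist (f x) (f w) := by
          rcases h2 with ⟨rfl, rfl⟩ | ⟨rfl, rfl⟩
          · rfl
          · exact dist_comm _ _
        rw [if_pos hT'ab, if_neg hTab, if_pos (Sym2.eq_iff.mpr h2), if_neg h1, hd]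
        ring
      · have hiff : T'.Adj a b ↔ T.Adj a b := by
          rw [hadj]
          constructor
          · rintro (⟨h, -⟩ | hc)
            · exact h
            · exact absurd hc h2
          · exact fun h => Or.inl ⟨h, h1⟩
        rw [if_neg h1, if_neg h2]
        by_cases h : T.Adj a b
        · rw [if_pos h, if_pos (hiff.mpr h)]; ring
        · rw [if_neg h, if_neg (fun hh => h (hiff.mp hh))]; ring
  unfold weight
  calc (∑ a : V, ∑ b : V, if T'.Adj a b then dist (f a) (f b) else 0)
      = ∑ a : V, ∑ b : V, (((if T.Adj a b then dist (f a) (f b) else 0)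
          + (if s(a, b) = s(x, w) then dist (f x) (f w) else 0))
          - (if s(a, b) = s(u, v) then dist (f u) (f v) else 0)) :=
        Finset.sum_congr rfl fun a _ => Finset.sum_congr rfl fun b _ => key a b
    _ = ((∑ a : V, ∑ b : V, if T.Adj a b then dist (f a) (f b) else 0)
          + (∑ a : V, ∑ b : V, if s(a, b) = s(x, w) then dist (f x) (f w) else 0))
          - (∑ a : V, ∑ b : V, if s(a, b) = s(u, v) then dist (f u) (f v) else 0) := by
        simp [Finset.sum_sub_distrib, Finset.sum_add_distrib]
    _ = (∑ a : V, ∑ b : V, if T.Adj a b then dist (f a) (f b) else 0)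
          + 2 * dist (f x) (f w) - 2 * dist (f u) (f v) := by
        rw [sum_ind x w hxwne, sum_ind u v huv.ne]

/-- The minimum spanning tree of a finite point set in a
metric space with distinct pairwise distances is a subgraph of the relative
neighborhood graph: every MST edge `(u,v)` satisfies that there is no point `w`
with `max (δ(u,w)) (δ(v,w)) < δ(u,v)`. -/
theorem mst_subgraph_rng
    {V : Type*} [Fintype V] [DecidableEq V] {M : Type*} [MetricSpace M]
    (f : V → M) (hinj : Function.Injective f)
    (hdist : ∀ a b c d : V, a ≠ b → c ≠ d →
      dist (f a) (f b) = dist (f c) (f d) → (a = c ∧ b = d) ∨ (a = d ∧ b = c))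
    (T : SimpleGraph V) (hT : T.IsTree)
    (hmin : ∀ T' : SimpleGraph V, T'.IsTree → weight f T ≤ weight f T')
    (u v : V) (huv : T.Adj u v) :
    ¬ ∃ w : V, max (dist (f u) (f w)) (dist (f v) (f w)) < dist (f u) (f v) := by
  rintro ⟨w, hw⟩
  rw [max_lt_iff] at hw
  obtain ⟨h1, h2⟩ := hw
  have hwu : w ≠ u := by
    rintro rfl
    rw [dist_comm] at h2
    exact lt_irrefl _ h2
  have hwv : w ≠ v := by
    rintro rfl
    exact lt_irrefl _ h1
  by_cases hc : (T \ SimpleGraph.fromEdgeSet {s(u, v)}).Reachable u w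
  · obtain ⟨T', hT', hnadj, hadj⟩ := exchange T hT u v w huv hwu hwv hc
    have hvwuv : s(v, w) ≠ s(u, v) := by
      simp only [ne_eq, Sym2.eq_iff]
      rintro (⟨rfl, rfl⟩ | ⟨-, rfl⟩)
      · exact hwv rfl
      · exact hwu rfl
    have hwt := weight_exchange f T T' u v v w huv hnadj hvwuv (Ne.symm hwv) hadj
    have hle := hmin T' hT'
    rw [hwt] at hle
    linarith
  · rcases reach_or T hT.1 u v w with hr | hr
    · exact hc hr.symm
    · have hr' : (T \ SimpleGraph.fromEdgeSet {s(v, u)}).Reachable v w := by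
        rw [Sym2.eq_swap]
        exact hr.symm
      obtain ⟨T', hT', hnadj, hadj⟩ := exchange T hT v u w huv.symm hwv hwu hr'
      have huwvu : s(u, w) ≠ s(v, u) := by
        simp only [ne_eq, Sym2.eq_iff]
        rintro (⟨rfl, rfl⟩ | ⟨-, rfl⟩)
        · exact hwu rfl
        · exact hwv rfl
      have hwt := weight_exchange f T T' v u u w huv.symm hnadj huwvu (Ne.symm hwu) hadj
      have hle := hmin T' hT'
      rw [hwt, dist_comm (f v) (f u)] at hle
      linarith
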